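/- Every edge of a digraph that does not lie on a directed circuit lies on a directed cut. More precisely: if e is an edge of (G,ρ), oriented from u to v, that is contained in no directed circuit, and V₁ is the set of vertices from which there is a directed path (possibly of length zero) to u, then v ∉ V₁ and every edge of the cut [V₁,V₁^c] is oriented from V₁ to V₁^c, so [V₁,V₁^c] is a directed cut containing e. -/

import Mathlib

/-- A directed circuit of the digraph given by `tl, hd : E → V`. -/
def IsDirectedCircuit {V E : Type} (tl hd : E → V) (C : Set E) : Prop :=
  ∃ l : List E, l ≠ [] ∧ l.Nodup ∧ (l.map tl).Nodup ∧ C = {e | e ∈ l} ∧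
    ∀ i : Fin l.length,
      hd (l.get i) = tl (l.get ⟨(i.1 + 1) % l.length, Nat.mod_lt _ i.pos⟩)

/-- The set of edges between `S` and its complement. -/
def cutSet {V E : Type} (tl hd : E → V) (S : Set V) : Set E :=
  {e | (tl e ∈ S ∧ hd e ∉ S) ∨ (tl e ∉ S ∧ hd e ∈ S)}

/-- A directed cut: a nonempty cut `[S,Sᶜ]` all of whose edges go from `S` to `Sᶜ`. -/
def IsDirectedCut {V E : Type} (tl hd : E → V) (C : Set E) : Prop :=
  ∃ S : Set V, C = cutSet tl hd S ∧ C.Nonempty ∧ ∀ e ∈ C, tl e ∈ S ∧ hd e ∉ S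

/-- Directed reachability: there is a directed path (possibly of length zero). -/
def DReach {V E : Type} (tl hd : E → V) : V → V → Prop :=
  Relation.ReflTransGen (fun a b => ∃ e, tl e = a ∧ hd e = b)

namespace DCutAux

variable {V E : Type} (tl hd : E → V)

/-- A walk along edges from `a` to `b`. -/
def Walk : List E → V → V → Prop
  | [], a, b => a = b
  | e :: es, a, b => tl e = a ∧ Walk es (hd e) b

variable {tl hd}

theorem walk_append : ∀ (es₁ : List E) {es₂ : List E} (a b : V),
    Walk tl hd (es₁ ++ es₂) a b ↔ ∃ c, Walk tl hd es₁ a c ∧ Walk tl hd es₂ c b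
  | [], es₂, a, b => by simp [Walk]
  | e :: es, es₂, a, b => by
    show (tl e = a ∧ Walk tl hd (es ++ es₂) (hd e) b) ↔ _
    rw [walk_append es]
    constructor
    · rintro ⟨h1, c, h2, h3⟩; exact ⟨c, ⟨h1, h2⟩, h3⟩
    · rintro ⟨c, ⟨h1, h2⟩, h3⟩; exact ⟨h1, c, h2, h3⟩

theorem dreach_iff {a b : V} : DReach tl hd a b ↔ ∃ es, Walk tl hd es a b := by
  constructor
  · intro h
    induction h using Relation.ReflTransGen.head_induction_on with
    | refl => exact ⟨[], rfl⟩
    | head h _ ih =>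
      obtain ⟨e, he1, he2⟩ := h
      obtain ⟨es, hw⟩ := ih
      exact ⟨e :: es, he1, he2 ▸ hw⟩
  · rintro ⟨es, hw⟩
    induction es generalizing a with
    | nil => exact hw ▸ Relation.ReflTransGen.refl
    | cons e es ih =>
      obtain ⟨h1, h2⟩ := hw
      exact Relation.ReflTransGen.head ⟨e, h1, rfl⟩ (ih h2)

/-- Shortening: any walk contains a walk with no repeated vertices. -/
theorem walk_shorten : ∀ (n : ℕ) (es : List E), es.length ≤ n → ∀ (a b : V),
    Walk tl hd es a b →
    ∃ es', Walk tl hd es' a b ∧ es' ⊆ es ∧ (a :: es'.map hd).Nodup := by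
  intro n
  induction n with
  | zero =>
    intro es hlen a b hw
    have : es = [] := List.length_eq_zero_iff.1 (Nat.le_zero.1 hlen)
    subst this
    exact ⟨[], hw, by simp, by simp⟩
  | succ n ih =>
    intro es hlen a b hw
    by_cases ha : a ∈ es.map hd
    · obtain ⟨e', he', hhd⟩ := List.mem_map.1 ha
      obtain ⟨s, t, rfl⟩ := List.append_of_mem he'
      obtain ⟨c, hw1, hw2⟩ := (walk_append _ _ _).1 hw
      obtain ⟨h1, h2⟩ := hw2
      rw [hhd] at h2
      have hlt : t.length ≤ n := by
        simp only [List.length_append, List.length_cons] at hlen; omega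
      obtain ⟨es', hw', hsub, hnd⟩ := ih t hlt a b h2
      refine ⟨es', hw', fun x hx => ?_, hnd⟩
      exact List.mem_append.2 (Or.inr (List.mem_cons.2 (Or.inr (hsub hx))))
    · cases es with
      | nil => exact ⟨[], hw, by simp, by simp⟩
      | cons e rest =>
        obtain ⟨h1, h2⟩ := hw
        have hlt : rest.length ≤ n := by
          simp only [List.length_cons] at hlen; omega
        obtain ⟨es', hw', hsub, hnd⟩ := ih rest hlt (hd e) b h2
        refine ⟨e :: es', ⟨h1, hw'⟩, List.cons_subset_cons e hsub, ?_⟩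
        refine List.nodup_cons.2 ⟨?_, by simpa using hnd⟩
        intro hmem
        apply ha
        rcases List.mem_cons.1 hmem with h | h
        · simp [h]
        · obtain ⟨x, hx, hxa⟩ := List.mem_map.1 h
          exact List.mem_map.2 ⟨x, List.mem_cons.2 (Or.inr (hsub hx)), hxa⟩

theorem walk_map_tl {es : List E} {a b : V} (hw : Walk tl hd es a b) :
    es.map tl = (a :: es.map hd).dropLast := by
  induction es generalizing a with
  | nil => rfl
  | cons e es ih =>
    obtain ⟨h1, h2⟩ := hw
    simp only [List.map_cons, List.dropLast_cons₂, h1, ih h2]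

theorem walk_getLast {es : List E} {a b : V} (hw : Walk tl hd es a b) :
    (a :: es.map hd).getLast (by simp) = b := by
  induction es generalizing a with
  | nil => exact hw
  | cons e es ih =>
    obtain ⟨h1, h2⟩ := hw
    rw [List.map_cons, List.getLast_cons (by simp)]
    exact ih h2

theorem walk_tl_zero {es : List E} {a b : V} (hw : Walk tl hd es a b)
    (h : 0 < es.length) : tl (es.get ⟨0, h⟩) = a := by
  cases es with
  | nil => simp at h
  | cons e es => exact hw.1

theorem walk_get_succ {es : List E} {a b : V} (hw : Walk tl hd es a b) :
    ∀ (i : ℕ) (h : i + 1 < es.length),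
      hd (es.get ⟨i, by omega⟩) = tl (es.get ⟨i + 1, h⟩) := by
  induction es generalizing a with
  | nil => intro i h; simp at h
  | cons e es ih =>
    intro i h
    obtain ⟨h1, h2⟩ := hw
    cases i with
    | zero =>
      simp only [List.get_cons_succ]
      exact (walk_tl_zero h2 (by simpa using h)).symm
    | succ j =>
      simp only [List.get_cons_succ]
      exact ih h2 j (by simpa using h)

theorem walk_hd_last {es : List E} {a b : V} (hw : Walk tl hd es a b)
    (h : 0 < es.length) : hd (es.get ⟨es.length - 1, by omega⟩) = b := by
  induction es generalizing a with
  | nil => simp at h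
  | cons e es ih =>
    obtain ⟨h1, h2⟩ := hw
    cases es with
    | nil => exact h2
    | cons f fs =>
      have := ih h2 (by simp)
      simpa using this

theorem isDirectedCircuit_of_walk (e : E) {es : List E}
    (hw : Walk tl hd es (hd e) (tl e))
    (hnd : (hd e :: es.map hd).Nodup) :
    IsDirectedCircuit tl hd {x | x ∈ e :: es} := by
  have hmt : es.map tl = (hd e :: es.map hd).dropLast := walk_map_tl hw
  have hlast : (hd e :: es.map hd).getLast (by simp) = tl e := walk_getLast hw
  have hLdecomp : (hd e :: es.map hd) =
      (hd e :: es.map hd).dropLast ++ [tl e] := by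
    conv_lhs => rw [← List.dropLast_append_getLast (l := hd e :: es.map hd) (by simp)]
    rw [hlast]
  have hndtl : ((e :: es).map tl).Nodup := by
    rw [List.map_cons, hmt, List.nodup_cons]
    constructor
    · intro hmem
      rw [hLdecomp] at hnd
      have := (List.nodup_append.1 hnd).2.2
      exact this _ hmem _ (by simp) rfl
    · exact hnd.sublist (List.dropLast_sublist _)
  refine ⟨e :: es, by simp, hndtl.of_map, hndtl, rfl, ?_⟩
  intro i
  rcases i with ⟨i, hi⟩
  simp only [List.length_cons] at hi
  by_cases hend : i + 1 = es.length + 1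
  · -- wrap around
    have hmod : (i + 1) % (e :: es).length = 0 := by
      simp [List.length_cons, hend]
    simp only [hmod]
    have hget0 : (e :: es).get ⟨0, by simp⟩ = e := rfl
    rw [hget0]
    have hieq : i = es.length := by omega
    subst hieq
    cases es with
    | nil => exact hw
    | cons f fs =>
      have := walk_hd_last hw (by simp)
      have hg : (e :: f :: fs).get ⟨(f :: fs).length, by simp⟩ =
          (f :: fs).get ⟨(f :: fs).length - 1, by simp⟩ := by
        cases fs <;> simp [List.get]
      rw [hg]
      exact this
  · have hlt : i + 1 < es.length + 1 := by omega
    have hmod : (i + 1) % (e :: es).length = i + 1 :=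
      Nat.mod_eq_of_lt (by simp only [List.length_cons]; omega)
    simp only [hmod]
    cases i with
    | zero =>
      have hg : (e :: es).get ⟨1, by simpa using hlt⟩ = es.get ⟨0, by omega⟩ := rfl
      show hd ((e :: es).get ⟨0, _⟩) = _
      rw [hg]
      exact (walk_tl_zero hw (by omega)).symm
    | succ j =>
      have hg1 : (e :: es).get ⟨j + 1, by simp only [List.length_cons]; omega⟩ =
          es.get ⟨j, by omega⟩ := rfl
      have hg2 : (e :: es).get ⟨j + 2, by simp only [List.length_cons]; omega⟩ =
          es.get ⟨j + 1, by omega⟩ := rfl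
      show hd ((e :: es).get ⟨j + 1, _⟩) = _
      rw [hg1, hg2]
      exact walk_get_succ hw j (by omega)

end DCutAux

/-- If the edge `e`, oriented from `u` to `v`, lies on no directed circuit, and
`V₁` is the set of vertices from which there is a directed path to `u`, then
`v ∉ V₁`, every edge of the cut `[V₁,V₁ᶜ]` is oriented from `V₁` to `V₁ᶜ`, and
`[V₁,V₁ᶜ]` is a directed cut containing `e`. -/
theorem stmt2 {V E : Type} [Fintype V] [Fintype E] (tl hd : E → V) (e : E) (u v : V)
    (hu : tl e = u) (hv : hd e = v)
    (hnc : ∀ C : Set E, IsDirectedCircuit tl hd C → e ∉ C) :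
    v ∉ {w | DReach tl hd w u} ∧
    (∀ e' ∈ cutSet tl hd {w | DReach tl hd w u},
        tl e' ∈ {w | DReach tl hd w u} ∧ hd e' ∉ {w | DReach tl hd w u}) ∧
    e ∈ cutSet tl hd {w | DReach tl hd w u} ∧
    IsDirectedCut tl hd (cutSet tl hd {w | DReach tl hd w u}) := by
  subst hu hv
  have hvnot : hd e ∉ {w | DReach tl hd w (tl e)} := by
    intro hvS
    obtain ⟨es, hw⟩ := DCutAux.dreach_iff.1 hvS
    obtain ⟨es', hw', -, hnd⟩ := DCutAux.walk_shorten es.length es le_rfl _ _ hw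
    exact hnc _ (DCutAux.isDirectedCircuit_of_walk e hw' hnd) List.mem_cons_self
  have hS : ∀ e' ∈ cutSet tl hd {w | DReach tl hd w (tl e)},
      tl e' ∈ {w | DReach tl hd w (tl e)} ∧ hd e' ∉ {w | DReach tl hd w (tl e)} := by
    rintro e' (⟨h1, h2⟩ | ⟨h1, h2⟩)
    · exact ⟨h1, h2⟩
    · exact absurd (Relation.ReflTransGen.head ⟨e', rfl, rfl⟩ h2) h1
  have heC : e ∈ cutSet tl hd {w | DReach tl hd w (tl e)} :=
    Or.inl ⟨Relation.ReflTransGen.refl, hvnot⟩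
  exact ⟨hvnot, hS, heC, ⟨_, rfl, ⟨e, heC⟩, hS⟩⟩
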